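/- Correctness of epoch-based day arithmetic: for every valid date D and every integer n, toΔ(D +D n) = toΔ(D) + n. -/
import Mathlib


/-- A date is a triple of integers (year, month, day). -/
structure Date where
  y : ℤ
  m : ℤ
  d : ℤ

/-- A year is a leap year iff divisible by 4 and (not by 100, or by 400). -/
def isLeap (y : ℤ) : Prop :=
  y % 4 = 0 ∧ (y % 100 ≠ 0 ∨ y % 400 = 0)

/-- Number of days in month `m` of year `y`. -/
def nbdays (y m : ℤ) : ℤ :=
  if m = 4 ∨ m = 6 ∨ m = 9 ∨ m = 11 then 30
  else if m = 2 then
    (if y % 4 = 0 ∧ (y % 100 ≠ 0 ∨ y % 400 = 0) then 29 else 28)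
  else 31

/-- A date is valid iff `1 ≤ m ≤ 12` and `1 ≤ d ≤ nbdays y m`. -/
def Date.valid (D : Date) : Prop :=
  1 ≤ D.m ∧ D.m ≤ 12 ∧ 1 ≤ D.d ∧ D.d ≤ nbdays D.y D.m

/-- Month addition `(y, m, d) +m n`, with round-down of the day component. -/
def addMonths (D : Date) (n : ℤ) : Date :=
  ⟨D.y + (D.m - 1 + n) / 12,
   1 + (D.m - 1 + n) % 12,
   min D.d (nbdays (D.y + (D.m - 1 + n) / 12) (1 + (D.m - 1 + n) % 12))⟩

/-- A configuration of the small-step day-addition machine: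
either a pending addition `D +D n`, or a finished date. -/
inductive Conf where
  | pending (D : Date) (n : ℤ)
  | done (D : Date)

/-- Small-step rules for day addition `+D`. -/
inductive Step : Conf → Conf → Prop where
  | add_days {y m d n : ℤ}
      (h1 : 1 ≤ d + n) (h2 : d + n ≤ nbdays y m) :
      Step (Conf.pending ⟨y, m, d⟩ n) (Conf.done ⟨y, m, d + n⟩)
  | add_days_over {y m d n : ℤ}
      (h : d + n > nbdays y m) :
      Step (Conf.pending ⟨y, m, d⟩ n)
        (Conf.pending (addMonths ⟨y, m, 1⟩ 1) (n - (nbdays y m - d) - 1))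
  | add_days_under1 {y m d n : ℤ}
      (h1 : 1 < d) (h2 : d + n ≤ 0) :
      Step (Conf.pending ⟨y, m, d⟩ n) (Conf.pending ⟨y, m, 1⟩ (d - 1 + n))
  | add_days_under2 {y m n y' m' : ℤ}
      (h1 : 1 + n ≤ 0) (h2 : addMonths ⟨y, m, 1⟩ (-1) = ⟨y', m', 1⟩) :
      Step (Conf.pending ⟨y, m, 1⟩ n) (Conf.pending ⟨y', m', 1⟩ (n + nbdays y' m'))

/-- Reduction in finitely many steps. -/
def Reduces : Conf → Conf → Prop := Relation.ReflTransGen Step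

instance : Nonempty Date := ⟨⟨2000, 3, 1⟩⟩

/-- `addDays D n` is the unique valid normal form of `D +D n`
(when it exists; arbitrary otherwise). -/
noncomputable def addDays (D : Date) (n : ℤ) : Date :=
  Classical.epsilon fun D' : Date =>
    D'.valid ∧ Reduces (Conf.pending D n) (Conf.done D')

/-- Date-period addition `D +P (ny, nm, nd) = (D +m (12·ny + nm)) +D nd`. -/
noncomputable def addPeriod (D : Date) (P : ℤ × ℤ × ℤ) : Date :=
  addDays (addMonths D (12 * P.1 + P.2.1)) P.2.2

/-- Lexicographic order on dates. -/
def Date.le (a b : Date) : Prop :=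
  a.y < b.y ∨ (a.y = b.y ∧ a.m < b.m) ∨ (a.y = b.y ∧ a.m = b.m ∧ a.d ≤ b.d)

/-- Strict lexicographic order on dates. -/
def Date.lt (a b : Date) : Prop :=
  a.y < b.y ∨ (a.y = b.y ∧ a.m < b.m) ∨ (a.y = b.y ∧ a.m = b.m ∧ a.d < b.d)

/-- The epoch date: March 1, 2000. -/
def epoch : Date := ⟨2000, 3, 1⟩

/-- `toDelta D` is the unique integer `n` with `epoch +D n = D`
(when it exists; arbitrary otherwise). -/
noncomputable def toDelta (D : Date) : ℤ :=
  Classical.epsilon fun n : ℤ => addDays epoch n = D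

-- ===== auxiliary development =====

lemma nbdays_ge (y m : ℤ) : 28 ≤ nbdays y m := by
  unfold nbdays; split_ifs <;> norm_num

/-- Days-count for the first day of the month with global month-index `i`
(where `i = 12*y + m - 1`). -/
def gAux (y j : ℤ) : ℤ :=
  (if j ≤ 1 then 365*(y-1) + (y-1)/4 - (y-1)/100 + (y-1)/400
   else 365*y + y/4 - y/100 + y/400)
  + (if j = 0 then 306 else if j = 1 then 337 else if j = 2 then 0
     else if j = 3 then 31 else if j = 4 then 61 else if j = 5 then 92
     else if j = 6 then 122 else if j = 7 then 153 else if j = 8 then 184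
     else if j = 9 then 214 else if j = 10 then 245 else 275)

def GG (i : ℤ) : ℤ := gAux (i/12) (i%12)

lemma gAux_succ (y j : ℤ) (h0 : 0 ≤ j) (h10 : j ≤ 10) :
    gAux y (j+1) = gAux y j + nbdays y (j+1) := by
  have e4 : (y-1)/4 = (if y%4 = 0 then y/4 - 1 else y/4) := by split_ifs <;> omega
  have e100 : (y-1)/100 = (if y%100 = 0 then y/100 - 1 else y/100) := by split_ifs <;> omega
  have e400 : (y-1)/400 = (if y%400 = 0 then y/400 - 1 else y/400) := by split_ifs <;> omega
  interval_cases j <;>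
    simp only [gAux, nbdays] <;>
    norm_num <;>
    first
      | omega
      | (rw [e4, e100, e400]; split_ifs <;> omega)

lemma GG_succ (i : ℤ) : GG (i+1) = GG i + nbdays (i/12) (1 + i%12) := by
  obtain ⟨y, j, hj0, hj11, rfl⟩ : ∃ y j, 0 ≤ j ∧ j < 12 ∧ i = 12*y + j :=
    ⟨i/12, i%12, by omega, by omega, by omega⟩
  have h1 : (12*y+j)/12 = y := by omega
  have h2 : (12*y+j)%12 = j := by omega
  by_cases hj : j ≤ 10
  · have h3 : (12*y+j+1)/12 = y := by omega
    have h4 : (12*y+j+1)%12 = j+1 := by omega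
    rw [GG, GG, h1, h2, h3, h4]
    have := gAux_succ y j hj0 hj
    rw [this]; ring_nf
  · have hj11' : j = 11 := by omega
    subst hj11'
    have h3 : (12*y+11+1)/12 = y+1 := by omega
    have h4 : (12*y+11+1)%12 = 0 := by omega
    rw [GG, GG, h1, h2, h3, h4]
    simp only [gAux, nbdays]
    norm_num
    omega

lemma GG_succ' (y m : ℤ) (hm1 : 1 ≤ m) (hm2 : m ≤ 12) :
    GG (12*y + m) = GG (12*y + m - 1) + nbdays y m := by
  have h := GG_succ (12*y + m - 1)
  rw [show (12*y+m-1)/12 = y from by omega, show 1 + (12*y+m-1)%12 = m from by omega,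
      show 12*y+m-1+1 = 12*y+m from by ring] at h
  exact h

/-- Day number of a date. -/
def fD (D : Date) : ℤ := GG (12*D.y + D.m - 1) + D.d

def confOK : Conf → Prop
  | Conf.pending D _ => 1 ≤ D.m ∧ D.m ≤ 12
  | Conf.done _ => True

def cdelta : Conf → ℤ
  | Conf.pending D n => fD D + n
  | Conf.done D => fD D

lemma step_invariant {c c' : Conf} (h : Step c c') (hc : confOK c) :
    confOK c' ∧ cdelta c' = cdelta c := by
  cases h with
  | @add_days y m d n h1 h2 =>
      refine ⟨trivial, ?_⟩
      simp only [cdelta, fD]; ring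
  | @add_days_over y m d n h =>
      obtain ⟨hm1, hm2⟩ := hc
      have hA : addMonths ⟨y, m, 1⟩ 1 = ⟨y + m/12, 1 + m%12, 1⟩ := by
        have h0 : m - 1 + 1 = m := by ring
        simp only [addMonths, h0]
        have := nbdays_ge (y + m/12) (1 + m%12)
        congr 1
        omega
      rw [hA]
      refine ⟨⟨show (1:ℤ) ≤ 1 + m%12 by omega, show (1:ℤ) + m%12 ≤ 12 by omega⟩, ?_⟩
      simp only [cdelta, fD]
      have hidx : 12*(y + m/12) + (1 + m%12) - 1 = 12*y + m := by omega
      rw [hidx, GG_succ' y m hm1 hm2]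
      ring
  | @add_days_under1 y m d n h1 h2 =>
      refine ⟨hc, ?_⟩
      simp only [cdelta, fD]; ring
  | @add_days_under2 y m n y' m' h1 h2 =>
      have ey : y' = y + (m-2)/12 := by
        have := congrArg Date.y h2
        simp only [addMonths] at this
        rw [show m - 1 + (-1) = m - 2 from by ring] at this
        exact this.symm
      have em : m' = 1 + (m-2)%12 := by
        have := congrArg Date.m h2
        simp only [addMonths] at this
        rw [show m - 1 + (-1) = m - 2 from by ring] at this
        exact this.symm
      have hm'1 : 1 ≤ m' := by omega
      have hm'2 : m' ≤ 12 := by omega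
      refine ⟨⟨hm'1, hm'2⟩, ?_⟩
      simp only [cdelta, fD]
      have hidx : 12*y' + m' = 12*y + m - 1 := by omega
      have := GG_succ' y' m' hm'1 hm'2
      rw [hidx] at this
      rw [show 12*y+m-1-1 = 12*y'+m'-1 from by omega] at this
      omega

lemma red_invariant {c c' : Conf} (h : Reduces c c') (hc : confOK c) :
    confOK c' ∧ cdelta c' = cdelta c := by
  induction h with
  | refl => exact ⟨hc, rfl⟩
  | tail hab hbc ih =>
      obtain ⟨hb, he⟩ := ih
      obtain ⟨hc', he'⟩ := step_invariant hbc hb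
      exact ⟨hc', he'.trans he⟩

lemma terminates : ∀ (k : ℕ) (D : Date) (n : ℤ), n.natAbs ≤ k → D.valid →
    ∃ E, E.valid ∧ Reduces (Conf.pending D n) (Conf.done E) := by
  intro k
  induction k using Nat.strong_induction_on with
  | _ k IH =>
    intro D n hk hD
    obtain ⟨y, m, d⟩ := D
    obtain ⟨hm1, hm2, hd1, hd2⟩ := hD
    simp only at hm1 hm2 hd1 hd2
    by_cases h1 : d + n ≤ nbdays y m
    · by_cases h2 : 1 ≤ d + n
      · exact ⟨⟨y, m, d+n⟩, ⟨hm1, hm2, h2, h1⟩,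
          Relation.ReflTransGen.single (Step.add_days h2 h1)⟩
      · push_neg at h2
        by_cases hd : 1 < d
        · -- under1
          have hstep : Step (Conf.pending ⟨y,m,d⟩ n) (Conf.pending ⟨y,m,1⟩ (d-1+n)) :=
            Step.add_days_under1 hd (by omega)
          have hlt : (d-1+n).natAbs < k := by omega
          obtain ⟨E, hE, hred⟩ := IH (d-1+n).natAbs hlt ⟨y,m,1⟩ (d-1+n) le_rfl
            ⟨hm1, hm2, le_refl 1, nbdays_ge y m |>.trans' (by norm_num)⟩
          exact ⟨E, hE, Relation.ReflTransGen.head hstep hred⟩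
        · -- d = 1, under2
          have hd1' : d = 1 := by omega
          subst hd1'
          obtain ⟨y', hy'⟩ : ∃ t, t = y + (m-2)/12 := ⟨_, rfl⟩
          obtain ⟨m', hm'⟩ : ∃ t, t = 1 + (m-2)%12 := ⟨_, rfl⟩
          have hnb' := nbdays_ge y' m'
          have hA : addMonths ⟨y, m, 1⟩ (-1) = ⟨y', m', 1⟩ := by
            rw [hy', hm']
            simp only [addMonths, show m - 1 + (-1) = m - 2 from by ring]
            congr 1
            have := nbdays_ge (y + (m-2)/12) (1 + (m-2)%12)
            omega
          have hn1 : 1 + n ≤ 0 := by omega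
          have hstep : Step (Conf.pending ⟨y,m,1⟩ n)
              (Conf.pending ⟨y',m',1⟩ (n + nbdays y' m')) :=
            Step.add_days_under2 hn1 hA
          have hvalid' : Date.valid ⟨y',m',1⟩ :=
            ⟨show (1:ℤ) ≤ m' by omega, show m' ≤ (12:ℤ) by omega, le_refl 1,
             show (1:ℤ) ≤ nbdays y' m' by omega⟩
          by_cases hpos : 0 ≤ n + nbdays y' m'
          · -- finish in one more step
            have hfin : Step (Conf.pending ⟨y',m',1⟩ (n + nbdays y' m'))
                (Conf.done ⟨y',m',1 + (n + nbdays y' m')⟩) :=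
              Step.add_days (by omega) (by omega)
            exact ⟨⟨y',m',1 + (n + nbdays y' m')⟩,
              ⟨show (1:ℤ) ≤ m' by omega, show m' ≤ (12:ℤ) by omega,
               show (1:ℤ) ≤ 1 + (n + nbdays y' m') by omega,
               show 1 + (n + nbdays y' m') ≤ nbdays y' m' by omega⟩,
              Relation.ReflTransGen.head hstep (Relation.ReflTransGen.single hfin)⟩
          · have hlt : (n + nbdays y' m').natAbs < k := by omega
            obtain ⟨E, hE, hred⟩ := IH _ hlt ⟨y',m',1⟩ (n + nbdays y' m') le_rfl hvalid'
            exact ⟨E, hE, Relation.ReflTransGen.head hstep hred⟩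
    · -- overflow
      push_neg at h1
      have hstep : Step (Conf.pending ⟨y,m,d⟩ n)
          (Conf.pending (addMonths ⟨y,m,1⟩ 1) (n - (nbdays y m - d) - 1)) :=
        Step.add_days_over h1
      have hA : addMonths ⟨y, m, 1⟩ 1 = ⟨y + m/12, 1 + m%12, 1⟩ := by
        have h0 : m - 1 + 1 = m := by ring
        simp only [addMonths, h0]
        have := nbdays_ge (y + m/12) (1 + m%12)
        congr 1
        omega
      have hnb := nbdays_ge y m
      have hvalid' : Date.valid ⟨y + m/12, 1 + m%12, 1⟩ :=
        ⟨show (1:ℤ) ≤ 1 + m%12 by omega, show (1:ℤ) + m%12 ≤ 12 by omega, le_refl 1,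
         show (1:ℤ) ≤ nbdays (y + m/12) (1 + m%12) by
           have := nbdays_ge (y + m/12) (1 + m%12); omega⟩
      have hlt : (n - (nbdays y m - d) - 1).natAbs < k := by omega
      obtain ⟨E, hE, hred⟩ := IH _ hlt _ _ le_rfl hvalid'
      rw [hA] at hstep
      exact ⟨E, hE, Relation.ReflTransGen.head hstep hred⟩

lemma addDays_spec {D : Date} (hD : D.valid) (n : ℤ) :
    (addDays D n).valid ∧ Reduces (Conf.pending D n) (Conf.done (addDays D n)) := by
  obtain ⟨E, hE⟩ := terminates n.natAbs D n le_rfl hD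
  exact Classical.epsilon_spec (p := fun D' : Date =>
    D'.valid ∧ Reduces (Conf.pending D n) (Conf.done D')) ⟨E, hE⟩

lemma fD_addDays {D : Date} (hD : D.valid) (n : ℤ) :
    fD (addDays D n) = fD D + n := by
  obtain ⟨_, hred⟩ := addDays_spec hD n
  have := red_invariant hred (c := Conf.pending D n) ⟨hD.1, hD.2.1⟩
  simpa [cdelta] using this.2

lemma GG_mono : StrictMono GG := by
  apply strictMono_int_of_lt_succ
  intro i
  rw [GG_succ i]
  have := nbdays_ge (i/12) (1 + i%12)
  omega

lemma fD_inj {D E : Date} (hD : D.valid) (hE : E.valid) (h : fD D = fD E) : D = E := by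
  obtain ⟨y, m, d⟩ := D
  obtain ⟨y2, m2, d2⟩ := E
  obtain ⟨hm1, hm2, hd1, hd2⟩ := hD
  obtain ⟨hm1', hm2', hd1', hd2'⟩ := hE
  simp only at hm1 hm2 hd1 hd2 hm1' hm2' hd1' hd2'
  simp only [fD] at h
  have hb1 : GG (12*y+m-1) < fD ⟨y,m,d⟩ := by simp only [fD]; omega
  have hb2 : fD ⟨y,m,d⟩ ≤ GG (12*y+m) := by
    rw [GG_succ' y m hm1 hm2]; simp only [fD]; omega
  have hb1' : GG (12*y2+m2-1) < fD ⟨y2,m2,d2⟩ := by simp only [fD]; omega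
  have hb2' : fD ⟨y2,m2,d2⟩ ≤ GG (12*y2+m2) := by
    rw [GG_succ' y2 m2 hm1' hm2']; simp only [fD]; omega
  have hidx : 12*y+m = 12*y2+m2 := by
    by_contra hne
    rcases lt_or_gt_of_ne hne with hlt | hlt
    · have := GG_mono.monotone (show 12*y+m ≤ 12*y2+m2-1 from by omega)
      have := hb2.trans this
      simp only [fD] at hb1' this
      omega
    · have := GG_mono.monotone (show 12*y2+m2 ≤ 12*y+m-1 from by omega)
      have := hb2'.trans this
      simp only [fD] at hb1 this
      omega
  have hy : y = y2 := by omega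
  have hm : m = m2 := by omega
  subst hy; subst hm
  have : d = d2 := by omega
  rw [this]

lemma epoch_valid : epoch.valid := by
  refine ⟨by norm_num [epoch], by norm_num [epoch], by norm_num [epoch], ?_⟩
  norm_num [epoch, nbdays]

lemma toDelta_eq {D : Date} (hD : D.valid) : toDelta D = fD D - fD epoch := by
  have hex : ∃ k : ℤ, addDays epoch k = D := by
    refine ⟨fD D - fD epoch, ?_⟩
    have hv := (addDays_spec epoch_valid (fD D - fD epoch)).1
    have hf := fD_addDays epoch_valid (fD D - fD epoch)
    exact fD_inj hv hD (by omega)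
  have hspec : addDays epoch (toDelta D) = D :=
    Classical.epsilon_spec (p := fun n : ℤ => addDays epoch n = D) hex
  have hf := fD_addDays epoch_valid (toDelta D)
  rw [hspec] at hf
  omega

/-- **Correctness of epoch-based day arithmetic**: for every valid date `D` and every
integer `n`, `toΔ(D +D n) = toΔ(D) + n`. -/
theorem toDelta_addDays (D : Date) (hD : D.valid) (n : ℤ) :
    toDelta (addDays D n) = toDelta D + n := by
  have hA := addDays_spec hD n
  rw [toDelta_eq hA.1, toDelta_eq hD, fD_addDays hD n]
  ring
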